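/- arXiv:2210.03193 — 4 statements merged into one kernel-verified Lean document; each statement's English description precedes it below -/
import Mathlib

section
/- Let A be a commutative ring and let S be a multiplicative subset of A consisting of nonzerodivisors. If every prime ideal of the localization S⁻¹A is maximal, then S⁻¹A is the total ring of fractions of A; that is, the canonical map A → S⁻¹A exhibits S⁻¹A as the localization of A at the multiplicative set of all nonzerodivisors of A (equivalently, every nonzerodivisor of A becomes invertible in S⁻¹A). -/
lemma aux_isUnit_of_nonZeroDivisor {K : Type*} [CommRing K]
    (h : ∀ p : Ideal K, p.IsPrime → p.IsMaximal)
    {x : K} (hx : x ∈ nonZeroDivisors K) : IsUnit x := by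
  by_contra hu
  obtain ⟨m, hm, hxm⟩ := exists_max_ideal_of_mem_nonunits hu
  haveI := hm
  haveI : m.IsPrime := hm.isPrime
  obtain ⟨p, hp, hpm⟩ := Ideal.exists_minimalPrimes_le (I := (⊥ : Ideal K)) bot_le (J := m)
  have hpprime : p.IsPrime := hp.1.1
  haveI := hpprime
  have hxp : x ∈ p := ((h p hpprime).eq_of_le hm.ne_top hpm).symm ▸ hxm
  have hmin : p ∈ minimalPrimes K := hp
  have hnil : IsNilpotent (algebraMap K (Localization p.primeCompl) x) := by
    haveI := Ring.KrullDimLE.of_isLocalization p hmin (Localization p.primeCompl)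
    rw [Ring.KrullDimLE.isNilpotent_iff_mem_maximalIdeal]
    rw [IsLocalization.AtPrime.to_map_mem_maximal_iff (Localization p.primeCompl) p]
    exact hxp
  obtain ⟨n, hn⟩ := hnil
  rw [← map_pow] at hn
  rw [IsLocalization.map_eq_zero_iff p.primeCompl] at hn
  obtain ⟨s, hs⟩ := hn
  have : (s : K) = 0 := (pow_mem hx n).2 s (by simpa [mul_comm] using hs)
  exact s.2 (this ▸ p.zero_mem)

/-- If `S` is a multiplicative set of nonzerodivisors of `A` and every prime ideal of
`S⁻¹A` is maximal, then `S⁻¹A` is the total ring of fractions of `A`, i.e. the canonical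
map `A → S⁻¹A` exhibits `S⁻¹A` as the localization of `A` at all nonzerodivisors. -/
theorem stmt0 {A : Type*} [CommRing A] (S : Submonoid A) (hS : S ≤ nonZeroDivisors A)
    (h : ∀ p : Ideal (Localization S), p.IsPrime → p.IsMaximal) :
    IsFractionRing A (Localization S) := by
  refine IsLocalization.of_le S (nonZeroDivisors A) hS fun r hr => ?_
  have : algebraMap A (Localization S) r ∈ nonZeroDivisors (Localization S) :=
    IsLocalization.map_nonZeroDivisors_le S (Localization S) ⟨r, hr, rfl⟩
  exact aux_isUnit_of_nonZeroDivisor h this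
end

section
/- Let X be a set and let A_x (x ∈ X) be a family of reduced commutative rings, each having only finitely many minimal prime ideals, with total rings of fractions K_x. Then K := ∏_{x∈X} K_x is the total ring of fractions of A := ∏_{x∈X} A_x (i.e., the canonical map A → K exhibits K as the localization of A at its multiplicative set of nonzerodivisors), and every prime ideal of K is maximal. -/
section Aux

variable {R : Type*} [CommRing R]

/-- In a reduced ring, an element outside every minimal prime is a nonzerodivisor. -/
lemma aux_mem_nonZeroDivisors [IsReduced R] {x : R}
    (h : ∀ p ∈ minimalPrimes R, x ∉ p) : x ∈ nonZeroDivisors R := by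
  rw [mem_nonZeroDivisors_iff_right]
  intro y hy
  have hmem : y ∈ sInf (minimalPrimes R) := by
    rw [Submodule.mem_sInf]
    intro p hp
    have hprime : Ideal.IsPrime p := hp.1.1
    have hyx : y * x ∈ p := by rw [hy]; exact p.zero_mem
    rcases hprime.mem_or_mem hyx with h1 | h1
    · exact h1
    · exact absurd h1 (h p hp)
  have : sInf (minimalPrimes R) = nilradical R := by
    rw [minimalPrimes, Ideal.sInf_minimalPrimes]
    rfl
  rw [this, nilradical_eq_zero, Submodule.zero_eq_bot, Ideal.mem_bot] at hmem
  exact hmem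

/-- Von Neumann regularity of the total ring of fractions of a reduced ring with
finitely many minimal primes. -/
lemma aux_vnr {A Q : Type*} [CommRing A] [CommRing Q] [IsReduced A] [Algebra A Q]
    [IsFractionRing A Q] (hmin : (minimalPrimes A).Finite) (a : Q) :
    ∃ b : Q, a * a * b = a := by
  obtain ⟨⟨x, s⟩, rfl⟩ := IsLocalization.mk'_surjective (nonZeroDivisors A) a
  classical
  set T := hmin.toFinset with hT
  set P := T.filter (fun p => x ∈ p) with hP
  set Q' := T.filter (fun p => x ∉ p) with hQ
  have hTmem : ∀ p, p ∈ T ↔ p ∈ minimalPrimes A := fun p => hmin.mem_toFinset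
  have hprimeT : ∀ p ∈ T, Ideal.IsPrime p := fun p hp => ((hTmem p).1 hp).1.1
  -- find z in all primes of Q' but no prime of P
  have hz : ∃ z : A, (∀ q ∈ Q', z ∈ q) ∧ (∀ p ∈ P, z ∉ p) := by
    by_contra hcon
    push_neg at hcon
    have hsub : ((Q'.inf id : Ideal A) : Set A) ⊆ ⋃ p ∈ (P : Set (Ideal A)), (p : Set A) := by
      intro z hz
      have hz' : ∀ q ∈ Q', z ∈ q := by
        intro q hq
        exact Submodule.mem_finsetInf.1 hz q hq
      obtain ⟨p, hpP, hzp⟩ := hcon z hz'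
      exact Set.mem_biUnion hpP hzp
    rw [Ideal.subset_union_prime ⊥ ⊥ (fun p hp _ _ => hprimeT p (Finset.mem_filter.1 hp).1)]
      at hsub
    obtain ⟨p, hpP, hle⟩ := hsub
    have hpPrime : p.IsPrime := hprimeT p (Finset.mem_filter.1 hpP).1
    rw [hpPrime.inf_le'] at hle
    obtain ⟨q, hqQ, hqle⟩ := hle
    -- q ≤ p with both minimal primes forces q = p, contradiction
    have hpmin : p ∈ minimalPrimes A := (hTmem p).1 (Finset.mem_filter.1 hpP).1
    have hqPrime : q.IsPrime := hprimeT q (Finset.mem_filter.1 hqQ).1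
    rw [minimalPrimes_eq_minimals, Set.mem_setOf] at hpmin
    have : p ≤ q := hpmin.2 hqPrime (by exact hqle)
    have hpq : p = q := le_antisymm this hqle
    have h1 : x ∈ p := (Finset.mem_filter.1 hpP).2
    have h2 : x ∉ q := (Finset.mem_filter.1 hqQ).2
    exact h2 (hpq ▸ h1)
  obtain ⟨z, hz1, hz2⟩ := hz
  -- x * z = 0
  have hxz : x * z = 0 := by
    have hmem : x * z ∈ sInf (minimalPrimes A) := by
      rw [Submodule.mem_sInf]
      intro p hp
      have hprime : Ideal.IsPrime p := hp.1.1
      have hpT : p ∈ T := (hTmem p).2 hp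
      by_cases hx : x ∈ p
      · exact Ideal.mul_mem_right _ _ hx
      · exact Ideal.mul_mem_left _ _ (hz1 p (Finset.mem_filter.2 ⟨hpT, hx⟩))
    have : sInf (minimalPrimes A) = nilradical A := by
      rw [minimalPrimes, Ideal.sInf_minimalPrimes]; rfl
    rw [this, nilradical_eq_zero, Submodule.zero_eq_bot, Ideal.mem_bot] at hmem
    exact hmem
  -- u := x + z is a nonzerodivisor
  have hu : x + z ∈ nonZeroDivisors A := by
    apply aux_mem_nonZeroDivisors
    intro p hp hmem
    have hpT : p ∈ T := (hTmem p).2 hp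
    by_cases hx : x ∈ p
    · have hzp : z ∉ p := hz2 p (Finset.mem_filter.2 ⟨hpT, hx⟩)
      exact hzp (by simpa using p.sub_mem hmem hx)
    · have hzp : z ∈ p := hz1 p (Finset.mem_filter.2 ⟨hpT, hx⟩)
      exact hx (by simpa using p.sub_mem hmem hzp)
  refine ⟨IsLocalization.mk' Q (s : A) ⟨x + z, hu⟩, ?_⟩
  rw [← IsLocalization.mk'_mul, ← IsLocalization.mk'_mul, IsLocalization.mk'_eq_iff_eq]
  congr 1
  push_cast
  linear_combination (-((s : A) * (s : A))) * hxz

end Aux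

/-- Let `A x (x : X)` be a family of reduced commutative rings, each with finitely many
minimal primes, and with total rings of fractions `K x`.  Then `∏ x, K x` is the total
ring of fractions of `∏ x, A x` (via the product of the localization maps), and every
prime ideal of `∏ x, K x` is maximal. -/
theorem stmt1 {X : Type*} (A : X → Type*) (K : X → Type*)
    [∀ x, CommRing (A x)] [∀ x, CommRing (K x)]
    [∀ x, IsReduced (A x)] [∀ x, Algebra (A x) (K x)]
    [∀ x, IsFractionRing (A x) (K x)]
    (hmin : ∀ x, (minimalPrimes (A x)).Finite) :
    letI : Algebra (∀ x, A x) (∀ x, K x) :=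
      (Pi.ringHom fun x => (algebraMap (A x) (K x)).comp (Pi.evalRingHom A x)).toAlgebra
    IsFractionRing (∀ x, A x) (∀ x, K x) ∧
      ∀ p : Ideal (∀ x, K x), p.IsPrime → p.IsMaximal := by
  letI : Algebra (∀ x, A x) (∀ x, K x) :=
    (Pi.ringHom fun x => (algebraMap (A x) (K x)).comp (Pi.evalRingHom A x)).toAlgebra
  have halg : ∀ (a : ∀ x, A x) (x : X),
      algebraMap (∀ x, A x) (∀ x, K x) a x = algebraMap (A x) (K x) (a x) := by
    intro a x; rfl
  -- nonzerodivisors in the product are componentwise nonzerodivisors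
  have hnzd : ∀ s : ∀ x, A x, s ∈ nonZeroDivisors (∀ x, A x) ↔
      ∀ x, s x ∈ nonZeroDivisors (A x) := by
    intro s
    constructor
    · intro hs x
      rw [mem_nonZeroDivisors_iff_right]
      intro a ha
      classical
      have := mem_nonZeroDivisors_iff_right.1 hs (Function.update (0 : ∀ x, A x) x a) ?_
      · have := congrFun this x
        simpa using this
      · funext y
        by_cases hxy : y = x
        · subst hxy; simpa using ha
        · simp [Function.update_of_ne hxy]
    · intro hs
      rw [mem_nonZeroDivisors_iff_right]
      intro a ha
      funext x
      exact mem_nonZeroDivisors_iff_right.1 (hs x) (a x) (congrFun ha x)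
  constructor
  · constructor
    constructor
    · rintro ⟨s, hs⟩
      rw [hnzd] at hs
      rw [isUnit_iff_exists_inv]
      refine ⟨fun x => ↑(IsLocalization.map_units (K x) ⟨s x, hs x⟩).unit⁻¹, ?_⟩
      funext x
      have := (IsLocalization.map_units (K x) ⟨s x, hs x⟩).unit.val_inv
      simp only [halg]
      exact this
    · intro z
      classical
      have h : ∀ x, ∃ (p : A x × nonZeroDivisors (A x)),
          z x * algebraMap (A x) (K x) p.2 = algebraMap (A x) (K x) p.1 :=
        fun x => IsLocalization.surj (nonZeroDivisors (A x)) (z x)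
      choose p hp using h
      refine ⟨(fun x => (p x).1, ⟨fun x => ((p x).2 : A x), ?_⟩), ?_⟩
      · rw [hnzd]; exact fun x => (p x).2.2
      · funext x
        simpa [halg] using hp x
    · intro a b hab
      refine ⟨1, ?_⟩
      simp only [one_mul, OneMemClass.coe_one]
      funext x
      exact IsFractionRing.injective (A x) (K x) (congrFun hab x)
  · intro p hp
    classical
    apply Ideal.Quotient.maximal_of_isField
    refine ⟨?_, mul_comm, ?_⟩
    · exact exists_pair_ne _
    · intro a ha
      obtain ⟨z, rfl⟩ := Ideal.Quotient.mk_surjective a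
      have h : ∀ x, ∃ b : K x, z x * z x * b = z x := fun x => aux_vnr (hmin x) (z x)
      choose b hb using h
      have hzb : z * z * b = z := by funext x; exact hb x
      refine ⟨Ideal.Quotient.mk p b, ?_⟩
      have h0 : (Ideal.Quotient.mk p z) * ((Ideal.Quotient.mk p z) * (Ideal.Quotient.mk p b) - 1)
          = 0 := by
        rw [mul_sub, mul_one, ← mul_assoc, ← map_mul, ← map_mul, hzb, sub_self]
      rcases mul_eq_zero.1 h0 with h1 | h1
      · exact absurd h1 ha
      · rw [sub_eq_zero] at h1; exact h1
end

section
/- Let A → B be a map of commutative rings and let f : X → Spec(A) be an M-morphism. Assume that every nonzerodivisor of A_red is mapped to a nonzerodivisor of B_red under the induced map A_red → B_red. Then the base change f_B : X ×_{Spec(A)} Spec(B) → Spec(B) is an M-morphism. -/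
open AlgebraicGeometry CategoryTheory CategoryTheory.Limits

universe u

/-- The canonical map from `A` to the total ring of fractions of `A_red`. -/
noncomputable def totalFractionMap (A : Type u) [CommRing A] :
    CommRingCat.of A ⟶ CommRingCat.of (FractionRing (A ⧸ nilradical A)) :=
  CommRingCat.ofHom ((algebraMap (A ⧸ nilradical A) (FractionRing (A ⧸ nilradical A))).comp
    (Ideal.Quotient.mk (nilradical A)))

/-- `f : X ⟶ Spec A` is an M-morphism if it is proper, of finite presentation, and its
base change to the total fraction ring of `A_red` is an isomorphism. -/
def IsMMorphism {A : Type u} [CommRing A] {X : Scheme.{u}}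
    (f : X ⟶ Spec (CommRingCat.of A)) : Prop :=
  IsProper f ∧ LocallyOfFinitePresentation f ∧
    IsIso (pullback.snd f (Spec.map (totalFractionMap A)))

section Aux

variable {A B : Type u} [CommRing A] [CommRing B] (φ : A →+* B)

lemma nilradical_le_comap : nilradical A ≤ (nilradical B).comap φ := fun a ha => by
  simpa [Ideal.mem_comap, mem_nilradical] using (mem_nilradical.mp ha).map φ

/-- The induced map on reductions. -/
noncomputable def redMap : A ⧸ nilradical A →+* B ⧸ nilradical B :=
  Ideal.quotientMap (nilradical B) φ (nilradical_le_comap φ)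

lemma redMap_comap
    (hφ : ∀ a : A,
      Ideal.Quotient.mk (nilradical A) a ∈ nonZeroDivisors (A ⧸ nilradical A) →
      Ideal.Quotient.mk (nilradical B) (φ a) ∈ nonZeroDivisors (B ⧸ nilradical B)) :
    nonZeroDivisors (A ⧸ nilradical A) ≤
      (nonZeroDivisors (B ⧸ nilradical B)).comap (redMap φ) := by
  intro x hx
  obtain ⟨a, rfl⟩ := Ideal.Quotient.mk_surjective x
  simpa [redMap, Ideal.quotientMap_mk] using hφ a hx

/-- The induced map on total fraction rings. -/
noncomputable def fracMap
    (hφ : ∀ a : A,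
      Ideal.Quotient.mk (nilradical A) a ∈ nonZeroDivisors (A ⧸ nilradical A) →
      Ideal.Quotient.mk (nilradical B) (φ a) ∈ nonZeroDivisors (B ⧸ nilradical B)) :
    FractionRing (A ⧸ nilradical A) →+* FractionRing (B ⧸ nilradical B) :=
  IsLocalization.map (FractionRing (B ⧸ nilradical B)) (redMap φ) (redMap_comap φ hφ)

lemma fracMap_comm
    (hφ : ∀ a : A,
      Ideal.Quotient.mk (nilradical A) a ∈ nonZeroDivisors (A ⧸ nilradical A) →
      Ideal.Quotient.mk (nilradical B) (φ a) ∈ nonZeroDivisors (B ⧸ nilradical B)) :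
    (fracMap φ hφ).comp ((algebraMap (A ⧸ nilradical A) (FractionRing (A ⧸ nilradical A))).comp
        (Ideal.Quotient.mk (nilradical A))) =
      ((algebraMap (B ⧸ nilradical B) (FractionRing (B ⧸ nilradical B))).comp
        (Ideal.Quotient.mk (nilradical B))).comp φ := by
  ext a
  simp [fracMap, IsLocalization.map_eq, redMap, Ideal.quotientMap_mk]

lemma spec_comm
    (hφ : ∀ a : A,
      Ideal.Quotient.mk (nilradical A) a ∈ nonZeroDivisors (A ⧸ nilradical A) →
      Ideal.Quotient.mk (nilradical B) (φ a) ∈ nonZeroDivisors (B ⧸ nilradical B)) :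
    Spec.map (totalFractionMap B) ≫ Spec.map (CommRingCat.ofHom φ) =
      Spec.map (CommRingCat.ofHom (fracMap φ hφ)) ≫ Spec.map (totalFractionMap A) := by
  rw [← Spec.map_comp, ← Spec.map_comp]
  congr 1
  exact CommRingCat.hom_ext (fracMap_comm φ hφ).symm

lemma isIso_snd_congr {X Y Z : Scheme.{u}} (f : X ⟶ Z) {h h' : Y ⟶ Z}
    (e : h = h') (H : IsIso (pullback.snd f h')) :
    IsIso (pullback.snd f h) := by
  subst e; exact H

end Aux

/-- Base change of an M-morphism along a ring map `A → B` sending nonzerodivisors of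
`A_red` to nonzerodivisors of `B_red` is an M-morphism. -/
theorem stmt2 {A B : Type u} [CommRing A] [CommRing B] (φ : A →+* B)
    (hφ : ∀ a : A,
      Ideal.Quotient.mk (nilradical A) a ∈ nonZeroDivisors (A ⧸ nilradical A) →
      Ideal.Quotient.mk (nilradical B) (φ a) ∈ nonZeroDivisors (B ⧸ nilradical B))
    {X : Scheme.{u}} (f : X ⟶ Spec (CommRingCat.of A)) (hf : IsMMorphism f) :
    IsMMorphism (pullback.snd f (Spec.map (CommRingCat.ofHom φ))) := by
  obtain ⟨h1, h2, h3⟩ := hf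
  have hfp := locallyOfFinitePresentation_isStableUnderBaseChange
  refine ⟨IsProper.isStableUnderBaseChange.of_isPullback (IsPullback.of_hasPullback _ _) h1,
    hfp.of_isPullback (IsPullback.of_hasPullback _ _) h2, ?_⟩
  set g := Spec.map (CommRingCat.ofHom φ)
  set tA := Spec.map (totalFractionMap A)
  set tB := Spec.map (totalFractionMap B)
  set ψ := Spec.map (CommRingCat.ofHom (fracMap φ hφ))
  have key : pullback.snd (pullback.snd f g) tB =
      (pullbackLeftPullbackSndIso f g tB).hom ≫ pullback.snd f (tB ≫ g) := by
    rw [pullbackLeftPullbackSndIso_hom_snd]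
  rw [key]
  have hmid : IsIso (pullback.snd f (tB ≫ g)) := by
    refine isIso_snd_congr f (spec_comm φ hφ) ?_
    have key2 : pullback.snd f (ψ ≫ tA) =
        (pullbackLeftPullbackSndIso f tA ψ).inv ≫ pullback.snd (pullback.snd f tA) ψ := by
      rw [pullbackLeftPullbackSndIso_inv_snd_snd]
    rw [key2]
    infer_instance
  infer_instance
end

section
/- Let A be a local integral domain and let X be an index set. Let 𝔐 be a maximal ideal of the product ring A^X = ∏_{x∈X} A. Then the localization (A^X)_𝔐 of A^X at 𝔐 is an integral domain. -/
/-- An ultrapower of a local integral domain is an integral domain: if `A` is a local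
domain, `X` an index set, and `𝔐` a maximal ideal of `∏ x : X, A`, then the localization
of `∏ x : X, A` at `𝔐` is an integral domain. -/
theorem stmt10 {A : Type*} [CommRing A] [IsLocalRing A] [IsDomain A] (X : Type*)
    (𝔐 : Ideal (X → A)) [𝔐.IsMaximal] :
    IsDomain (Localization.AtPrime 𝔐) := by
  classical
  have hprime : 𝔐.IsPrime := inferInstance
  -- key: annihilating idempotents
  have key : ∀ f g : X → A, f * g = 0 →
      ∃ e ∈ 𝔐.primeCompl, e * f = 0 ∨ e * g = 0 := by
    intro f g hfg
    set e : X → A := fun x => if f x = 0 then 1 else 0 with he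
    have h1 : e * f = 0 := by
      funext x
      simp only [Pi.mul_apply, Pi.zero_apply, he]
      by_cases h : f x = 0 <;> simp [h]
    have h2 : (1 - e) * g = 0 := by
      funext x
      simp only [Pi.mul_apply, Pi.zero_apply, Pi.sub_apply, Pi.one_apply, he]
      by_cases h : f x = 0
      · simp [h]
      · have : f x * g x = 0 := congrFun hfg x
        rcases mul_eq_zero.mp this with h' | h'
        · exact absurd h' h
        · simp [h, h']
    have hmul : e * (1 - e) = 0 := by
      funext x
      simp only [Pi.mul_apply, Pi.zero_apply, Pi.sub_apply, Pi.one_apply, he]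
      by_cases h : f x = 0 <;> simp [h]
    by_cases hmem : e ∈ 𝔐
    · refine ⟨1 - e, ?_, Or.inr h2⟩
      intro hc
      have : e * (1 - e) ∈ 𝔐 ∨ False := by
        exact Or.inl (by rw [hmul]; exact 𝔐.zero_mem)
      have hone : (1 : X → A) ∈ 𝔐 := by
        have := 𝔐.add_mem hmem hc
        simpa using this
      exact hprime.ne_top (Ideal.eq_top_iff_one _ |>.mpr hone)
    · exact ⟨e, hmem, Or.inl h1⟩
  have hnzd : NoZeroDivisors (Localization.AtPrime 𝔐) := by
    constructor
    intro x y hxy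
    obtain ⟨f, s, hx⟩ := IsLocalization.exists_mk'_eq 𝔐.primeCompl x
    obtain ⟨g, t, hy⟩ := IsLocalization.exists_mk'_eq 𝔐.primeCompl y
    rw [← hx, ← hy, ← IsLocalization.mk'_mul] at hxy
    rw [IsLocalization.mk'_eq_zero_iff] at hxy
    obtain ⟨c, hc⟩ := hxy
    have : (c * f) * g = 0 := by
      rw [show (c : X → A) * f * g = c * (f * g) by ring]; exact hc
    obtain ⟨e, hem, h | h⟩ := key _ _ this
    · left
      rw [← hx, IsLocalization.mk'_eq_zero_iff]
      exact ⟨⟨e, hem⟩ * c, by rw [show ((⟨e, hem⟩ * c : 𝔐.primeCompl) : X → A) * f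
        = e * (c * f) by push_cast; ring, h]⟩
    · right
      rw [← hy, IsLocalization.mk'_eq_zero_iff]
      exact ⟨⟨e, hem⟩, h⟩
  exact NoZeroDivisors.to_isDomain _
end
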